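/- The antiderivative operator $\mathcal{A}\varphi(t) = \int_{-\infty}^t \varphi(s)\,ds$ maps the Lizorkin space $\mathcal{S}_0(\mathbb{R})$ continuously into itself, and satisfies $\mathcal{A}(\varphi') = (\mathcal{A}\varphi)' = \varphi$ for all $\varphi \in \mathcal{S}_0(\mathbb{R})$. In particular, for every $m \in \mathbb{N}$ there is a constant $C$ with $\sup_x \langle x\rangle^m |\mathcal{A}\varphi(x)| \le C \sup_x \langle x\rangle^{2m+4} |\varphi(x)|$. -/

import Mathlib

open MeasureTheory Real Set Filter Topology

namespace Stmt9Aux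


lemma poly_bound (φ : SchwartzMap ℝ ℝ) (j : ℕ) :
    ∃ M : ℝ, 0 ≤ M ∧ ∀ s : ℝ, (1 + s ^ 2) ^ j * |φ s| ≤ M := by
  obtain ⟨C0, hC0pos, hC0⟩ := φ.decay 0 0
  obtain ⟨C1, hC1pos, hC1⟩ := φ.decay (2 * j) 0
  refine ⟨2 ^ j * (C0 + C1), by positivity, fun s => ?_⟩
  have h0 : |φ s| ≤ C0 := by simpa using hC0 s
  have h1 : |s| ^ (2 * j) * |φ s| ≤ C1 := by simpa using hC1 s
  have hb : (1 + s ^ 2) ^ j ≤ 2 ^ j * (1 + |s| ^ (2 * j)) := by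
    rcases le_total (|s|) 1 with h | h
    · have : (1 + s ^ 2) ^ j ≤ 2 ^ j := by
        apply pow_le_pow_left₀ (by positivity)
        nlinarith [sq_abs s, abs_nonneg s, sq_nonneg (1 - |s|)]
      nlinarith [pow_nonneg (abs_nonneg s) (2 * j), pow_pos (by norm_num : (0:ℝ) < 2) j]
    · have h2 : (1 + s ^ 2) ^ j ≤ (2 * s ^ 2) ^ j := by
        apply pow_le_pow_left₀ (by positivity)
        nlinarith [sq_abs s]
      have h3 : (2 * s ^ 2) ^ j = 2 ^ j * |s| ^ (2 * j) := by
        rw [mul_pow, pow_mul, sq_abs]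
      have := h2.trans_eq h3
      nlinarith [pow_pos (by norm_num : (0:ℝ) < 2) j, pow_nonneg (abs_nonneg s) (2 * j)]
  calc (1 + s ^ 2) ^ j * |φ s| ≤ (2 ^ j * (1 + |s| ^ (2 * j))) * |φ s| := by
        apply mul_le_mul_of_nonneg_right hb (abs_nonneg _)
    _ = 2 ^ j * (|φ s| + |s| ^ (2 * j) * |φ s|) := by ring
    _ ≤ 2 ^ j * (C0 + C1) := by
        apply mul_le_mul_of_nonneg_left (add_le_add h0 h1) (by positivity)

lemma key (φ : SchwartzMap ℝ ℝ) (h0 : ∫ x : ℝ, φ x = 0) (k : ℕ) (M : ℝ)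
    (hM : ∀ s : ℝ, (1 + s ^ 2) ^ (k + 1) * |φ s| ≤ M) (x : ℝ) :
    (1 + x ^ 2) ^ ((k : ℝ) / 2) * |∫ s in Set.Iic x, φ s| ≤ π * M := by
  have hint : Integrable (fun s : ℝ => φ s) := φ.integrable
  have hM0 : 0 ≤ M := le_trans (by positivity) (hM 0)
  have hb1 : (1:ℝ) ≤ 1 + x ^ 2 := by nlinarith [sq_nonneg x]
  set c : ℝ := M / (1 + x ^ 2) ^ k with hc
  have hc0 : 0 ≤ c := by positivity
  -- pointwise bound on the relevant half line
  have hpt : ∀ s : ℝ, x ^ 2 ≤ s ^ 2 → |φ s| ≤ c * (1 + s ^ 2)⁻¹ := by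
    intro s hs
    have h1 : (0:ℝ) < 1 + s ^ 2 := by nlinarith [sq_nonneg s]
    have h2 : (0:ℝ) < (1 + x ^ 2) ^ k := by positivity
    have h3 : (1 + x ^ 2) ^ k ≤ (1 + s ^ 2) ^ k :=
      pow_le_pow_left₀ (by positivity) (by nlinarith) k
    have h4 := hM s
    rw [pow_succ] at h4
    rw [hc, div_mul_eq_mul_div, le_div_iff₀ h2]
    calc |φ s| * (1 + x ^ 2) ^ k ≤ |φ s| * (1 + s ^ 2) ^ k :=
          mul_le_mul_of_nonneg_left h3 (abs_nonneg _)
      _ = ((1 + s ^ 2) ^ k * (1 + s ^ 2) * |φ s|) * (1 + s ^ 2)⁻¹ := by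
          field_simp
      _ ≤ M * (1 + s ^ 2)⁻¹ := by
          apply mul_le_mul_of_nonneg_right h4 (by positivity)
  have hintinv : Integrable (fun s : ℝ => c * (1 + s ^ 2)⁻¹) :=
    integrable_inv_one_add_sq.const_mul c
  -- bound the integral over a measurable set where the pointwise bound holds
  have hsetbound : ∀ A : Set ℝ, MeasurableSet A → (∀ s ∈ A, x ^ 2 ≤ s ^ 2) →
      |∫ s in A, φ s| ≤ c * π := by
    intro A hA hAs
    calc |∫ s in A, φ s| ≤ ∫ s in A, |φ s| := by
          simpa [Real.norm_eq_abs] using norm_integral_le_integral_norm (μ := volume.restrict A) (fun s => φ s)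
      _ ≤ ∫ s in A, c * (1 + s ^ 2)⁻¹ := by
          apply setIntegral_mono_on (hint.abs.integrableOn) (hintinv.integrableOn) hA
          intro s hs; exact hpt s (hAs s hs)
      _ ≤ ∫ s : ℝ, c * (1 + s ^ 2)⁻¹ := by
          apply setIntegral_le_integral hintinv
          filter_upwards with s using by positivity
      _ = c * π := by
          rw [integral_const_mul, integral_univ_inv_one_add_sq]
  have hmain : |∫ s in Set.Iic x, φ s| ≤ c * π := by
    rcases le_total x 0 with hx | hx
    · exact hsetbound _ measurableSet_Iic (fun s hs => by
        have : s ≤ x := hs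
        nlinarith)
    · have hsplit : (∫ s in Set.Iic x, φ s) = - ∫ s in Set.Ioi x, φ s := by
        have := intervalIntegral.integral_Iic_add_Ioi (b := x) hint.integrableOn hint.integrableOn
        rw [h0] at this
        linarith
      rw [hsplit, abs_neg]
      exact hsetbound _ measurableSet_Ioi (fun s hs => by
        have : x < s := hs
        nlinarith)
  -- combine with the power factor
  have hpow : (1 + x ^ 2) ^ ((k : ℝ) / 2) ≤ (1 + x ^ 2) ^ k := by
    rw [← Real.rpow_natCast (1 + x ^ 2) k]
    apply Real.rpow_le_rpow_of_exponent_le hb1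
    have : (0:ℝ) ≤ (k:ℝ) := Nat.cast_nonneg k
    linarith
  calc (1 + x ^ 2) ^ ((k : ℝ) / 2) * |∫ s in Set.Iic x, φ s|
      ≤ (1 + x ^ 2) ^ k * (c * π) := by
        apply mul_le_mul hpow hmain (abs_nonneg _) (by positivity)
    _ = π * M := by
        rw [hc]
        field_simp



lemma hasDerivAt_primitive (φ : SchwartzMap ℝ ℝ) (t : ℝ) :
    HasDerivAt (fun u : ℝ => ∫ s in Set.Iic u, φ s) (φ t) t := by
  have hint : Integrable (fun s : ℝ => φ s) := φ.integrable
  have heq : ∀ u : ℝ, (∫ s in Set.Iic u, φ s)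
      = (∫ s in Set.Iic (0:ℝ), φ s) + ∫ s in (0:ℝ)..u, φ s := by
    intro u
    rw [← intervalIntegral.integral_Iic_sub_Iic hint.integrableOn hint.integrableOn]
    ring
  have h1 : HasDerivAt (fun u : ℝ => (∫ s in Set.Iic (0:ℝ), φ s) + ∫ s in (0:ℝ)..u, φ s)
      (φ t) t := by
    apply HasDerivAt.const_add
    exact intervalIntegral.integral_hasDerivAt_right hint.intervalIntegrable
      φ.continuous.stronglyMeasurable.stronglyMeasurableAtFilter
      φ.continuous.continuousAt
  exact h1.congr_of_eventuallyEq (Filter.Eventually.of_forall heq)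

lemma tendsto_atBot_schwartz (φ : SchwartzMap ℝ ℝ) :
    Tendsto (fun x : ℝ => φ x) atBot (𝓝 0) :=
  (zero_at_infty φ).mono_left _root_.atBot_le_cocompact

lemma integrable_mul_pow (f : SchwartzMap ℝ ℝ) (n : ℕ) :
    Integrable (fun x : ℝ => f x * x ^ n) := by
  refine (f.integrable_pow_mul volume n).mono'
    (f.continuous.mul (continuous_pow n)).aestronglyMeasurable ?_
  filter_upwards with x
  simp only [norm_mul, norm_pow, Real.norm_eq_abs]
  rw [mul_comm]

lemma norm_x_pow_le (x : ℝ) (k : ℕ) : ‖x‖ ^ k ≤ (1 + x ^ 2) ^ ((k : ℝ) / 2) := by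
  have h1 : |x| ≤ (1 + x ^ 2) ^ ((1:ℝ) / 2) := by
    rw [← Real.sqrt_eq_rpow]
    calc |x| = Real.sqrt (x ^ 2) := (Real.sqrt_sq_eq_abs x).symm
      _ ≤ Real.sqrt (1 + x ^ 2) := Real.sqrt_le_sqrt (by nlinarith [sq_nonneg x])
  calc ‖x‖ ^ k ≤ ((1 + x ^ 2) ^ ((1:ℝ) / 2)) ^ k :=
        pow_le_pow_left₀ (norm_nonneg x) (by rwa [Real.norm_eq_abs]) k
    _ = (1 + x ^ 2) ^ ((k : ℝ) / 2) := by
        rw [← Real.rpow_natCast ((1 + x ^ 2) ^ ((1:ℝ)/2)) k,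
          ← Real.rpow_mul (by nlinarith [sq_nonneg x])]
        congr 1
        ring

lemma deriv_primitive (φ : SchwartzMap ℝ ℝ) :
    deriv (fun u : ℝ => ∫ s in Set.Iic u, φ s) = fun t => φ t :=
  funext fun t => (hasDerivAt_primitive φ t).deriv

noncomputable def psi (φ : SchwartzMap ℝ ℝ) (h0 : ∫ x : ℝ, φ x = 0) : SchwartzMap ℝ ℝ where
  toFun := fun t => ∫ s in Set.Iic t, φ s
  smooth' := by
    rw [contDiff_infty_iff_deriv]
    refine ⟨fun t => (hasDerivAt_primitive φ t).differentiableAt, ?_⟩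
    rw [deriv_primitive φ]
    exact φ.smooth'
  decay' := by
    intro k n
    match n with
    | 0 =>
      obtain ⟨M, hM0, hM⟩ := poly_bound φ (k + 1)
      have hM' : ∀ s : ℝ, (1 + s ^ 2) ^ (k + 1) * |φ s| ≤ M := hM
      refine ⟨π * M, fun x => ?_⟩
      rw [norm_iteratedFDeriv_zero]
      calc ‖x‖ ^ k * ‖∫ s in Set.Iic x, φ s‖
          ≤ (1 + x ^ 2) ^ ((k : ℝ) / 2) * |∫ s in Set.Iic x, φ s| := by
            rw [Real.norm_eq_abs]
            exact mul_le_mul_of_nonneg_right (norm_x_pow_le x k) (abs_nonneg _)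
        _ ≤ π * M := key φ h0 k M hM' x
    | Nat.succ n =>
      obtain ⟨C, _, hC⟩ := φ.decay k n
      refine ⟨C, fun x => ?_⟩
      have h1 : ‖iteratedFDeriv ℝ (n + 1) (fun t : ℝ => ∫ s in Set.Iic t, φ s) x‖
          = ‖iteratedFDeriv ℝ n (fun t => φ t) x‖ := by
        rw [norm_iteratedFDeriv_eq_norm_iteratedDeriv,
          norm_iteratedFDeriv_eq_norm_iteratedDeriv, iteratedDeriv_succ', deriv_primitive φ]
      rw [h1]
      exact hC x

lemma psi_apply (φ : SchwartzMap ℝ ℝ) (h0 : ∫ x : ℝ, φ x = 0) (t : ℝ) :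
    psi φ h0 t = ∫ s in Set.Iic t, φ s := rfl

lemma psi_moment (φ : SchwartzMap ℝ ℝ) (h0 : ∫ x : ℝ, φ x = 0)
    (hmom : ∀ n : ℕ, ∫ x : ℝ, φ x * x ^ n = 0) (n : ℕ) :
    ∫ x : ℝ, psi φ h0 x * x ^ n = 0 := by
  have hne : ((n : ℝ) + 1) ≠ 0 := by positivity
  have hv : ∀ x : ℝ, HasDerivAt (fun y : ℝ => y ^ (n + 1) / ((n : ℝ) + 1)) (x ^ n) x := by
    intro x
    have h := (hasDerivAt_pow (n + 1) x).div_const ((n : ℝ) + 1)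
    have he : ((n : ℕ) + 1 : ℕ) * x ^ (n + 1 - 1) / ((n : ℝ) + 1) = x ^ n := by
      push_cast
      field_simp
    exact he ▸ h
  have hu : ∀ x : ℝ, HasDerivAt (fun y : ℝ => psi φ h0 y) (φ x) x :=
    fun x => hasDerivAt_primitive φ x
  have huv' : Integrable ((fun x : ℝ => psi φ h0 x) * fun x : ℝ => x ^ n) :=
    integrable_mul_pow (psi φ h0) n
  have hu'v : Integrable ((fun x : ℝ => φ x) * fun y : ℝ => y ^ (n + 1) / ((n : ℝ) + 1)) := by
    apply ((integrable_mul_pow φ (n + 1)).div_const ((n : ℝ) + 1)).congr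
    filter_upwards with x
    show φ x * x ^ (n + 1) / ((n : ℝ) + 1) = φ x * (x ^ (n + 1) / ((n : ℝ) + 1))
    ring
  have huv : Integrable ((fun x : ℝ => psi φ h0 x) * fun y : ℝ => y ^ (n + 1) / ((n : ℝ) + 1)) := by
    apply ((integrable_mul_pow (psi φ h0) (n + 1)).div_const ((n : ℝ) + 1)).congr
    filter_upwards with x
    show psi φ h0 x * x ^ (n + 1) / ((n : ℝ) + 1) = psi φ h0 x * (x ^ (n + 1) / ((n : ℝ) + 1))
    ring
  have := integral_mul_deriv_eq_deriv_mul_of_integrable (fun x _ => hu x) (fun x _ => hv x) huv' hu'v huv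
  rw [this]
  have : (∫ x : ℝ, φ x * (x ^ (n + 1) / ((n : ℝ) + 1))) = 0 := by
    have heq : ∀ x : ℝ, φ x * (x ^ (n + 1) / ((n : ℝ) + 1))
        = (φ x * x ^ (n + 1)) / ((n : ℝ) + 1) := fun x => by ring
    simp_rw [heq]
    rw [integral_div, hmom (n + 1), zero_div]
  rw [this, neg_zero]

lemma primitive_deriv_eq (φ : SchwartzMap ℝ ℝ) (t : ℝ) :
    (∫ s in Set.Iic t, deriv (fun u => φ u) s) = φ t := by
  have hderiv : ∀ x ∈ Set.Iic t, HasDerivAt (fun u => φ u) (deriv (fun u => φ u) x) x :=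
    fun x _ => φ.differentiableAt.hasDerivAt
  have hint : IntegrableOn (fun s => deriv (fun u => φ u) s) (Set.Iic t) := by
    apply Integrable.integrableOn
    apply (SchwartzMap.derivCLM ℝ ℝ φ).integrable.congr
    filter_upwards with x
    exact SchwartzMap.derivCLM_apply ℝ φ x
  rw [integral_Iic_of_hasDerivAt_of_tendsto' hderiv hint (tendsto_atBot_schwartz φ), sub_zero]


end Stmt9Aux

open MeasureTheory

theorem stmt_9 :
    (∀ φ : SchwartzMap ℝ ℝ, (∀ n : ℕ, ∫ x : ℝ, φ x * x ^ n = 0) →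
      ∃ ψ : SchwartzMap ℝ ℝ,
        (∀ t : ℝ, ψ t = ∫ s in Set.Iic t, φ s) ∧
        (∀ n : ℕ, ∫ x : ℝ, ψ x * x ^ n = 0) ∧
        (∀ t : ℝ, deriv (fun u => ψ u) t = φ t) ∧
        (∀ t : ℝ, (∫ s in Set.Iic t, deriv (fun u => φ u) s) = φ t)) ∧
    (∀ m : ℕ, ∃ C : ℝ, 0 < C ∧
      ∀ φ : SchwartzMap ℝ ℝ, (∀ n : ℕ, ∫ x : ℝ, φ x * x ^ n = 0) →
        (⨆ x : ℝ, ((1 + x ^ 2) ^ ((m : ℝ) / 2)) * |∫ s in Set.Iic x, φ s|)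
          ≤ C * ⨆ x : ℝ, ((1 + x ^ 2) ^ (((2 * m + 4 : ℕ) : ℝ) / 2)) * |φ x|) := by
  constructor
  · intro φ hmom
    have h0 : ∫ x : ℝ, φ x = 0 := by simpa using hmom 0
    refine ⟨Stmt9Aux.psi φ h0, fun t => rfl, Stmt9Aux.psi_moment φ h0 hmom, fun t => ?_,
      Stmt9Aux.primitive_deriv_eq φ⟩
    exact (Stmt9Aux.hasDerivAt_primitive φ t).deriv
  · intro m
    refine ⟨Real.pi, Real.pi_pos, fun φ hmom => ?_⟩
    have h0 : ∫ x : ℝ, φ x = 0 := by simpa using hmom 0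
    set g : ℝ → ℝ := fun x => ((1 + x ^ 2) ^ (((2 * m + 4 : ℕ) : ℝ) / 2)) * |φ x| with hg
    have hexp : ∀ s : ℝ, (1 + s ^ 2) ^ (((2 * m + 4 : ℕ) : ℝ) / 2)
        = (1 + s ^ 2) ^ (m + 2) := by
      intro s
      rw [← Real.rpow_natCast (1 + s ^ 2) (m + 2)]
      congr 1
      push_cast
      ring
    obtain ⟨M', hM'0, hM'⟩ := Stmt9Aux.poly_bound φ (m + 2)
    have hbdd : BddAbove (Set.range g) := by
      refine ⟨M', fun y hy => ?_⟩
      obtain ⟨s, rfl⟩ := hy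
      rw [hg]
      simp only
      rw [hexp s]
      exact hM' s
    have hS : ∀ s : ℝ, (1 + s ^ 2) ^ (m + 1) * |φ s| ≤ ⨆ x : ℝ, g x := by
      intro s
      have h1 : (1 + s ^ 2) ^ (m + 1) * |φ s| ≤ g s := by
        rw [hg]
        simp only
        rw [hexp s]
        apply mul_le_mul_of_nonneg_right _ (abs_nonneg _)
        apply pow_le_pow_right₀ (by nlinarith [sq_nonneg s])
        omega
      exact h1.trans (le_ciSup hbdd s)
    apply ciSup_le
    intro x
    exact Stmt9Aux.key φ h0 m (⨆ x : ℝ, g x) hS x
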